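/- Let b be a real number with |1+2b| ≤ 1 and define f₁(z) = (z - z²)/((1+z)(1 - 2(1+2b)z + z²)) on the open unit disk D. Then for all z ∈ D \ {0}, Re((1+z)²f₁(z)/z) > 0. -/

import Mathlib

lemma aux_re_pos (w : ℂ) (hw : ‖w‖ < 1) : 0 < ((1 - w) / (1 + w)).re := by
  have h1 : (1 : ℂ) + w ≠ 0 := by
    intro h
    have hw1 : w = -1 := by linear_combination h
    rw [hw1] at hw; simp at hw
  have hN : 0 < Complex.normSq (1 + w) := Complex.normSq_pos.mpr h1
  have hns : Complex.normSq w < 1 := by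
    rw [← Complex.sq_norm]
    nlinarith [norm_nonneg w]
  rw [Complex.div_re, ← add_div, lt_div_iff₀ hN]
  rw [Complex.normSq_apply] at hns
  simp only [Complex.add_re, Complex.sub_re, Complex.one_re, Complex.add_im,
    Complex.sub_im, Complex.one_im]
  nlinarith

theorem f1_in_class (b : ℝ) (hb : |1 + 2 * b| ≤ 1)
    (f₁ : ℂ → ℂ)
    (hf : ∀ z, f₁ z = (z - z ^ 2) / ((1 + z) * (1 - 2 * (1 + 2 * b) * z + z ^ 2))) :
    ∀ z ∈ Metric.ball (0 : ℂ) 1, z ≠ 0 → 0 < ((1 + z) ^ 2 * f₁ z / z).re := by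
  intro z hz hz0
  have hzlt : ‖z‖ < 1 := by
    simpa [Complex.dist_eq] using Metric.mem_ball.mp hz
  obtain ⟨c, hc⟩ : ∃ c : ℂ, c = 1 + 2 * (b : ℂ) := ⟨_, rfl⟩
  have hf' : f₁ z = (z - z ^ 2) / ((1 + z) * (1 - 2 * c * z + z ^ 2)) := by
    rw [hf z, ← hc]
  have hcre : c = ((1 + 2 * b : ℝ) : ℂ) := by rw [hc]; push_cast; ring
  have hcabs : ‖c‖ ≤ 1 := by rw [hcre, Complex.norm_real, Real.norm_eq_abs]; exact hb
  have h1z : (1 : ℂ) + z ≠ 0 := by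
    intro h
    have hz1 : z = -1 := by linear_combination h
    rw [hz1] at hzlt; simp at hzlt
  have hupos : 0 < ‖1 - c * z‖ := by
    have hcz : ‖c * z‖ < 1 := by
      rw [norm_mul]
      nlinarith [norm_nonneg z, norm_nonneg c]
    have h2 : ‖(1 : ℂ)‖ - ‖c * z‖ ≤ ‖(1 : ℂ) - c * z‖ := norm_sub_norm_le _ _
    simp only [norm_one] at h2
    linarith
  have hu : (1 : ℂ) - c * z ≠ 0 := by
    intro h
    rw [h] at hupos; simp at hupos
  have hnz : Complex.normSq z < 1 := by
    rw [← Complex.sq_norm]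
    nlinarith [norm_nonneg z]
  have hsq : Complex.normSq (z - c) ≤ Complex.normSq (1 - c * z) := by
    rw [hcre]
    rw [Complex.normSq_apply] at hnz
    simp only [Complex.normSq_apply, Complex.sub_re, Complex.sub_im, Complex.mul_re,
      Complex.mul_im, Complex.ofReal_re, Complex.ofReal_im, Complex.one_re, Complex.one_im]
    have hb2 : (1 + 2 * b) ^ 2 ≤ 1 := by nlinarith [abs_nonneg (1 + 2 * b), sq_abs (1 + 2 * b)]
    nlinarith [sq_nonneg (z.re), sq_nonneg (z.im)]
  have hsub : ‖z - c‖ ≤ ‖1 - c * z‖ := by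
    rw [Complex.norm_def, Complex.norm_def]
    exact Real.sqrt_le_sqrt hsq
  have hkey : ‖z * (z - c)‖ < ‖1 - c * z‖ := by
    rw [norm_mul]
    have h1 := mul_le_mul_of_nonneg_left hsub (norm_nonneg z)
    have h2 : 0 < (1 - ‖z‖) * ‖1 - c * z‖ :=
      mul_pos (by linarith) hupos
    nlinarith
  obtain ⟨w, hwdef⟩ : ∃ w : ℂ, w = z * (z - c) / (1 - c * z) := ⟨_, rfl⟩
  have habsw : ‖w‖ < 1 := by
    rw [hwdef, norm_div]
    exact (div_lt_one hupos).mpr hkey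
  have h1w : (1 : ℂ) + w ≠ 0 := by
    intro h
    have hw1 : w = -1 := by linear_combination h
    rw [hw1] at habsw; simp at habsw
  have hden : (1 : ℂ) - 2 * c * z + z ^ 2 ≠ 0 := by
    have heq : (1 - c * z) * (1 + w) = 1 - 2 * c * z + z ^ 2 := by
      rw [hwdef]
      field_simp
      ring
    rw [← heq]
    exact mul_ne_zero hu h1w
  have hDz : (1 + z) * (1 - 2 * c * z + z ^ 2) * z ≠ 0 :=
    mul_ne_zero (mul_ne_zero h1z hden) hz0
  have heq : (1 + z) ^ 2 * f₁ z / z = (1 - w) / (1 + w) := by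
    rw [hf', mul_div_assoc, div_div, ← mul_div_assoc, div_eq_div_iff hDz h1w, hwdef]
    have hu' : (1 : ℂ) - z * c ≠ 0 := by rw [mul_comm]; exact hu
    field_simp
    ring
  rw [heq]
  exact aux_re_pos w habsw
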